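/- arXiv:2202.08725 — 3 statements merged into one kernel-verified Lean document; each statement's English description precedes it below -/
import Mathlib

section
/- Let P be a preorder whose order relation is symmetric (p ≤ q implies q ≤ p), and suppose there exist functions ψ : P → (P → P) (where P → P carries the pointwise preorder and the full function space is used), φ : (P → P) → P with φ monotone, and suppose ψ(φ(x)) ≤ x pointwise for every function x : P → P. Then all elements of P are equivalent: for all a, b ∈ P, a ≤ b. -/
theorem stmt_14 {P : Type*} [Preorder P]
    (hsym : ∀ p q : P, p ≤ q → q ≤ p)
    (ψ : P → (P → P)) (φ : (P → P) → P) (hφ : Monotone φ)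
    (hψφ : ∀ x : P → P, ψ (φ x) ≤ x) :
    ∀ a b : P, a ≤ b := by
  intro a b
  by_contra hab
  classical
  set x : P → P := fun p => if a ≤ ψ p p then b else a with hx
  set q := φ x with hq
  have h1 : ψ q q ≤ x q := hψφ x q
  have h2 : x q ≤ ψ q q := hsym _ _ h1
  by_cases h : a ≤ ψ q q
  · have hxq : x q = b := by simp [hx, h]
    exact hab (h.trans (hxq ▸ h1))
  · have hxq : x q = a := by simp [hx, h]
    exact h (hxq ▸ h2)
end

section
/- Let F be a set equipped with a preorder ≤ and two predicates (+) and (−) (a polarized preorder). Let S, L, M be preorders with M complete, let j : S → L be an order embedding, and let p : F → (functions S → M) be such that: (i) f ≤ g in F implies p_f ≤ p_g pointwise; (ii) if f is tagged + then p_f is monotone, and if tagged − then p_f is antitone; (iii) whenever f ≤ g in F with (f tagged + and g tagged −) or (f tagged − and g tagged +), then p_f(x) ≤ p_g(y) for all x, y ∈ S. Then there exists q : F → (functions L → M) with the same three preservation properties (order, polarity) such that q_f ∘ j = p_f for every f ∈ F. -/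
/-- Auxiliary step relation on `F × L` used to build the extension:
a step either moves up in `F` keeping the `L`-coordinate, or moves the
`L`-coordinate up at a positively tagged `f`, or down at a negatively
tagged `f`. -/
def ExtStep {F L : Type*} [Preorder F] [Preorder L] (pos neg : F → Prop) :
    F × L → F × L → Prop := fun a b =>
  (a.1 ≤ b.1 ∧ a.2 = b.2) ∨ (a.1 = b.1 ∧ pos a.1 ∧ a.2 ≤ b.2) ∨
    (a.1 = b.1 ∧ neg a.1 ∧ b.2 ≤ a.2)

/-- Extension Lemma: a polarity- and order-preserving map `p : F → (S → M)`
with the weak-completeness-like property extends along an order embedding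
`j : S → L` to a map `q : F → (L → M)`. -/
theorem stmt_15 {F S L M : Type*} [Preorder F] [Preorder S] [Preorder L] [Preorder M]
    (pos neg : F → Prop)
    (hM : ∀ T : Set M, ∃ v, IsLUB T v)
    (j : S → L) (hj_inj : Function.Injective j)
    (hj_ord : ∀ s s' : S, s ≤ s' ↔ j s ≤ j s')
    (p : F → S → M)
    (h_ord : ∀ f g : F, f ≤ g → ∀ x : S, p f x ≤ p g x)
    (h_pos : ∀ f : F, pos f → Monotone (p f))
    (h_neg : ∀ f : F, neg f → Antitone (p f))
    (h_wc : ∀ f g : F, f ≤ g →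
      ((pos f ∧ neg g) ∨ (neg f ∧ pos g)) → ∀ x y : S, p f x ≤ p g y) :
    ∃ q : F → L → M,
      (∀ f g : F, f ≤ g → ∀ x : L, q f x ≤ q g x) ∧
      (∀ f : F, pos f → Monotone (q f)) ∧
      (∀ f : F, neg f → Antitone (q f)) ∧
      (∀ f : F, ∀ s : S, q f (j s) = p f s) := by
  classical
  set Step : F × L → F × L → Prop := ExtStep pos neg with hStepDef
  -- Key lemma, by induction on chains of steps starting on the image of `j`.
  have key : ∀ (f : F) (s : S) (b : F × L),
      Relation.ReflTransGen Step (f, j s) b →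
      (∀ g₂ t, b.1 ≤ g₂ → pos g₂ → b.2 ≤ j t → p f s ≤ p g₂ t) ∧
      (∀ g₂ t, b.1 ≤ g₂ → neg g₂ → j t ≤ b.2 → p f s ≤ p g₂ t) ∧
      (∃ t', p f s ≤ p b.1 t') := by
    intro f s b h
    induction h with
    | refl =>
      refine ⟨?_, ?_, ⟨s, le_refl _⟩⟩
      · intro g₂ t hg hpos hle
        exact le_trans (h_ord f g₂ hg s) (h_pos g₂ hpos ((hj_ord s t).2 hle))
      · intro g₂ t hg hneg hle
        exact le_trans (h_ord f g₂ hg s) (h_neg g₂ hneg ((hj_ord t s).2 hle))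
    | @tail b c hab hbc ih =>
      obtain ⟨g', l'⟩ := b
      obtain ⟨g, l⟩ := c
      rw [hStepDef] at hbc
      rcases hbc with ⟨h1, h2⟩ | ⟨h1, h2, h3⟩ | ⟨h1, h2, h3⟩
      · -- move up in F, same l
        simp only at h1 h2
        subst h2
        refine ⟨?_, ?_, ?_⟩
        · intro g₂ t hg hpos hle
          exact ih.1 g₂ t (le_trans h1 hg) hpos hle
        · intro g₂ t hg hneg hle
          exact ih.2.1 g₂ t (le_trans h1 hg) hneg hle
        · obtain ⟨t', ht'⟩ := ih.2.2
          exact ⟨t', le_trans ht' (h_ord g' g h1 t')⟩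
      · -- pos step: l' ≤ l
        simp only at h1 h2 h3
        subst h1
        refine ⟨?_, ?_, ih.2.2⟩
        · intro g₂ t hg hpos hle
          exact ih.1 g₂ t hg hpos (le_trans h3 hle)
        · intro g₂ t hg hneg _
          obtain ⟨t', ht'⟩ := ih.2.2
          exact le_trans ht' (h_wc g' g₂ hg (Or.inl ⟨h2, hneg⟩) t' t)
      · -- neg step: l ≤ l'
        simp only at h1 h2 h3
        subst h1
        refine ⟨?_, ?_, ih.2.2⟩
        · intro g₂ t hg hpos _
          obtain ⟨t', ht'⟩ := ih.2.2
          exact le_trans ht' (h_wc g' g₂ hg (Or.inr ⟨h2, hpos⟩) t' t)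
        · intro g₂ t hg hneg hle
          exact ih.2.1 g₂ t hg hneg (le_trans hle h3)
  -- The set of values forced below `q g l`.
  set W : F → L → Set M := fun g l =>
    {m | ∃ f s, m = p f s ∧ Relation.ReflTransGen Step (f, j s) (g, l)} with hWdef
  choose v hv using fun g l => hM (W g l)
  refine ⟨fun g l => if h : ∃ s, j s = l then p g h.choose else v g l, ?_, ?_, ?_, ?_⟩
  · -- order preservation
    intro f g hfg x
    by_cases hx : ∃ s, j s = x
    · simp only [dif_pos hx]
      exact h_ord f g hfg _
    · simp only [dif_neg hx]
      refine (hv f x).2 ?_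
      intro m hm
      refine (hv g x).1 ?_
      obtain ⟨f₀, s₀, rfl, hchain⟩ := hm
      exact ⟨f₀, s₀, rfl, hchain.tail (Or.inl ⟨hfg, rfl⟩)⟩
  · -- monotone for positive tags
    intro g hg x y hxy
    by_cases hx : ∃ s, j s = x <;> by_cases hy : ∃ s, j s = y
    · simp only [dif_pos hx, dif_pos hy]
      refine h_pos g hg ((hj_ord _ _).2 ?_)
      rw [hx.choose_spec, hy.choose_spec]; exact hxy
    · simp only [dif_pos hx, dif_neg hy]
      refine (hv g y).1 ?_
      refine ⟨g, hx.choose, rfl, Relation.ReflTransGen.single (Or.inr (Or.inl ⟨rfl, hg, ?_⟩))⟩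
      rw [hx.choose_spec]; exact hxy
    · simp only [dif_neg hx, dif_pos hy]
      refine (hv g x).2 ?_
      intro m hm
      obtain ⟨f₀, s₀, rfl, hchain⟩ := hm
      refine (key f₀ s₀ (g, x) hchain).1 g hy.choose (le_refl g) hg ?_
      rw [hy.choose_spec]; exact hxy
    · simp only [dif_neg hx, dif_neg hy]
      refine (hv g x).2 ?_
      intro m hm
      refine (hv g y).1 ?_
      obtain ⟨f₀, s₀, rfl, hchain⟩ := hm
      exact ⟨f₀, s₀, rfl, hchain.tail (Or.inr (Or.inl ⟨rfl, hg, hxy⟩))⟩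
  · -- antitone for negative tags
    intro g hg x y hxy
    by_cases hx : ∃ s, j s = x <;> by_cases hy : ∃ s, j s = y
    · simp only [dif_pos hx, dif_pos hy]
      refine h_neg g hg ((hj_ord _ _).2 ?_)
      rw [hx.choose_spec, hy.choose_spec]; exact hxy
    · simp only [dif_pos hx, dif_neg hy]
      refine (hv g y).2 ?_
      intro m hm
      obtain ⟨f₀, s₀, rfl, hchain⟩ := hm
      refine (key f₀ s₀ (g, y) hchain).2.1 g hx.choose (le_refl g) hg ?_
      rw [hx.choose_spec]; exact hxy
    · simp only [dif_neg hx, dif_pos hy]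
      refine (hv g x).1 ?_
      refine ⟨g, hy.choose, rfl, Relation.ReflTransGen.single (Or.inr (Or.inr ⟨rfl, hg, ?_⟩))⟩
      rw [hy.choose_spec]; exact hxy
    · simp only [dif_neg hx, dif_neg hy]
      refine (hv g y).2 ?_
      intro m hm
      refine (hv g x).1 ?_
      obtain ⟨f₀, s₀, rfl, hchain⟩ := hm
      exact ⟨f₀, s₀, rfl, hchain.tail (Or.inr (Or.inr ⟨rfl, hg, hxy⟩))⟩
  · -- restriction along j
    intro f s
    have hx : ∃ s', j s' = j s := ⟨s, rfl⟩
    simp only [dif_pos hx]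
    rw [hj_inj hx.choose_spec]
end

section
/- In the Extension Lemma construction, where q_f(x) is defined as p_f(s) when x = j(s), and otherwise as the join of A(f,x) ∪ B(f,x) ∪ C(f) ∪ D(f) with A(f,x) = {p_h(s) : h tagged +, h ≤ f, j(s) ≤ x}, B(f,x) = {p_h(s) : h tagged −, h ≤ f, x ≤ j(s)}, C(f) = {p_h(s) : ∃k tagged + with k ≤ f and h tagged − with h ≤ k}, D(f) = {p_h(s) : ∃k tagged − with k ≤ f and h tagged + with h ≤ k}: if x = j(s), then every element of A(f,x) ∪ B(f,x) ∪ C(f) ∪ D(f) is ≤ p_f(s). -/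
theorem stmt_16 {F S L M : Type*} [Preorder F] [Preorder S] [Preorder L] [Preorder M]
    (pos neg : F → Prop)
    (hM : ∀ T : Set M, ∃ v, IsLUB T v)
    (j : S → L) (hj_inj : Function.Injective j)
    (hj_ord : ∀ s s' : S, s ≤ s' ↔ j s ≤ j s')
    (p : F → S → M)
    (h_ord : ∀ f g : F, f ≤ g → ∀ x : S, p f x ≤ p g x)
    (h_pos : ∀ f : F, pos f → Monotone (p f))
    (h_neg : ∀ f : F, neg f → Antitone (p f))
    (h_wc : ∀ f g : F, f ≤ g →
      ((pos f ∧ neg g) ∨ (neg f ∧ pos g)) → ∀ x y : S, p f x ≤ p g y) :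
    ∀ (f : F) (s : S), ∀ m : M,
      (m ∈ {m | ∃ h s', pos h ∧ h ≤ f ∧ j s' ≤ j s ∧ m = p h s'} ∪
           {m | ∃ h s', neg h ∧ h ≤ f ∧ j s ≤ j s' ∧ m = p h s'} ∪
           {m | ∃ h k s', pos k ∧ k ≤ f ∧ neg h ∧ h ≤ k ∧ m = p h s'} ∪
           {m | ∃ h k s', neg k ∧ k ≤ f ∧ pos h ∧ h ≤ k ∧ m = p h s'}) →
      m ≤ p f s := by
  intro f s m hm
  rcases hm with ((⟨h,s',hp,hf,hjs,hm⟩|⟨h,s',hn,hf,hjs,hm⟩)|⟨h,k,s',hpk,hkf,hnh,hhk,hm⟩)|⟨h,k,s',hnk,hkf,hph,hhk,hm⟩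
  · exact hm ▸ le_trans (h_pos h hp ((hj_ord s' s).2 hjs)) (h_ord h f hf s)
  · exact hm ▸ le_trans (h_neg h hn ((hj_ord s s').2 hjs)) (h_ord h f hf s)
  · exact hm ▸ le_trans (h_wc h k hhk (Or.inr ⟨hnh, hpk⟩) s' s) (h_ord k f hkf s)
  · exact hm ▸ le_trans (h_wc h k hhk (Or.inl ⟨hph, hnk⟩) s' s) (h_ord k f hkf s)
end
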